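/- Let B and C be n×n matrices over the nonnegative reals with Tr(C) ≤ 1, and let β > 0. Define μ = max_{k=1,…,n} (tr(B^k))^{1/k} and θ = max over k = 1,…,n−1, m = 1,…,n−k, and tuples of nonnegative integers (i_1,…,i_k) with i_1+⋯+i_k = m, of (tr(B^{i_1} ⊗ C ⊗ ⋯ ⊗ B^{i_k} ⊗ C))^{1/m}. Then Tr(β^{-1}B ⊕ C) ≤ 1 if and only if β ≥ max(μ, θ). -/

import Mathlib

open scoped NNReal

/-- Square matrices over the max-times semifield of nonnegative reals. -/
abbrev TMat (n : ℕ) := Matrix (Fin n) (Fin n) ℝ≥0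

/-- Tropical (max-times) matrix product. -/
noncomputable def tmul {n : ℕ} (A B : TMat n) : TMat n :=
  fun i j => Finset.univ.sup fun k => A i k * B k j

/-- Tropical (max-times) matrix-vector product. -/
noncomputable def tmulVec {n : ℕ} (A : TMat n) (x : Fin n → ℝ≥0) : Fin n → ℝ≥0 :=
  fun i => Finset.univ.sup fun j => A i j * x j

/-- Tropical identity matrix. -/
noncomputable def tId (n : ℕ) : TMat n := fun i j => if i = j then 1 else 0

/-- Tropical matrix powers. -/
noncomputable def tpow {n : ℕ} (A : TMat n) : ℕ → TMat n
  | 0 => tId n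
  | k + 1 => tmul A (tpow A k)

/-- Tropical (entrywise max) matrix addition. -/
noncomputable def tadd {n : ℕ} (A B : TMat n) : TMat n := fun i j => A i j ⊔ B i j

/-- Entrywise scalar multiplication. -/
noncomputable def tsmul {n : ℕ} (a : ℝ≥0) (A : TMat n) : TMat n := fun i j => a * A i j

/-- Tropical trace: tr A = max_i a_{ii}. -/
noncomputable def ttr {n : ℕ} (A : TMat n) : ℝ≥0 := Finset.univ.sup fun i => A i i

/-- Tropical "determinant": Tr(A) = max_{k=1..n} tr(A^k). -/
noncomputable def tTr {n : ℕ} (A : TMat n) : ℝ≥0 :=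
  (Finset.Icc 1 n).sup fun k => ttr (tpow A k)

/-- Kleene star: entrywise max of A^0, ..., A^{n-1}. -/
noncomputable def tstar {n : ℕ} (A : TMat n) : TMat n :=
  fun i j => (Finset.range n).sup fun k => tpow A k i j

/-- Tropical product of a finite chain of matrices F 0 ⊗ F 1 ⊗ ⋯ ⊗ F (k-1). -/
noncomputable def tchain {n : ℕ} : (k : ℕ) → (Fin k → TMat n) → TMat n
  | 0, _ => tId n
  | k + 1, F => tmul (F 0) (tchain k fun t => F t.succ)

/-- Tuples of k nonnegative integers with sum m. -/
def tuples (k m : ℕ) : Finset (Fin k → Fin (m + 1)) :=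
  Finset.univ.filter fun f => (∑ t, (f t : ℕ)) = m

/-- Tuples of k integers from {0,1} with sum l. -/
def binTuples (k l : ℕ) : Finset (Fin k → Fin 2) :=
  Finset.univ.filter fun j => (∑ t, (j t : ℕ)) = l

/-- The objective f_M(x) = max_{i,j} m_{ij} x_j / x_i. -/
noncomputable def fobj {n : ℕ} (M : TMat n) (x : Fin n → ℝ≥0) : ℝ≥0 :=
  Finset.univ.sup fun p : Fin n × Fin n => M p.1 p.2 * x p.2 / x p.1

/-- Spectral radius: λ = max_{k=1..n} (tr(A^k))^{1/k}. -/
noncomputable def specRad {n : ℕ} (A : TMat n) : ℝ≥0 :=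
  (Finset.Icc 1 n).sup fun k => ttr (tpow A k) ^ ((1 : ℝ) / k)

/-- σ = max over k=1..n-1, m=1..n-k and tuples (i_1,…,i_k) with sum m of
    (tr(A^{i_1} C ⋯ A^{i_k} C))^{1/m}. -/
noncomputable def sigmaC {n : ℕ} (A C : TMat n) : ℝ≥0 :=
  (Finset.Icc 1 (n - 1)).sup fun k =>
    (Finset.Icc 1 (n - k)).sup fun m =>
      (tuples k m).sup fun f =>
        ttr (tchain k fun t => tmul (tpow A (f t : ℕ)) C) ^ ((1 : ℝ) / m)

/-- r_{k,l,m} = max over tuples (i_1,…,i_k) with sum m and (j_1,…,j_k) ∈ {0,1}^k with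
    sum l of tr(A^{i_1} B^{j_1} C^{1-j_1} ⋯ A^{i_k} B^{j_k} C^{1-j_k}). -/
noncomputable def rklm {n : ℕ} (A B C : TMat n) (k l m : ℕ) : ℝ≥0 :=
  (tuples k m).sup fun f =>
    (binTuples k l).sup fun j =>
      ttr (tchain k fun t =>
        tmul (tpow A (f t : ℕ)) (tmul (tpow B (j t : ℕ)) (tpow C (1 - (j t : ℕ)))))

/-- G(s) = max_{k,m,l} r_{k,l,m}^{1/l} s^{-m/l}. -/
noncomputable def Gfun {n : ℕ} (A B C : TMat n) (s : ℝ≥0) : ℝ≥0 :=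
  (Finset.Icc 1 (n - 1)).sup fun k =>
    (Finset.Icc 1 (n - k)).sup fun m =>
      (Finset.Icc 1 k).sup fun l =>
        rklm A B C k l m ^ ((1 : ℝ) / l) * s ^ (-(m : ℝ) / l)

/-- H(t) = max_{k,m,l} r_{k,l,m}^{1/m} t^{-l/m}. -/
noncomputable def Hfun {n : ℕ} (A B C : TMat n) (t : ℝ≥0) : ℝ≥0 :=
  (Finset.Icc 1 (n - 1)).sup fun k =>
    (Finset.Icc 1 (n - k)).sup fun m =>
      (Finset.Icc 1 k).sup fun l =>
        rklm A B C k l m ^ ((1 : ℝ) / m) * t ^ (-(l : ℝ) / m)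

/-- Unconstrained r_{k,m} = max over tuples (i_1,…,i_k) with sum m of
    tr(A^{i_1} B ⋯ A^{i_k} B). -/
noncomputable def rkm {n : ℕ} (A B : TMat n) (k m : ℕ) : ℝ≥0 :=
  (tuples k m).sup fun f => ttr (tchain k fun t => tmul (tpow A (f t : ℕ)) B)

/-- Unconstrained G(s) = max_{k,m} r_{k,m}^{1/k} s^{-m/k}. -/
noncomputable def Gfun0 {n : ℕ} (A B : TMat n) (s : ℝ≥0) : ℝ≥0 :=
  (Finset.Icc 1 (n - 1)).sup fun k =>
    (Finset.Icc 1 (n - k)).sup fun m =>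
      rkm A B k m ^ ((1 : ℝ) / k) * s ^ (-(m : ℝ) / k)

/-- Unconstrained H(t) = max_{k,m} r_{k,m}^{1/m} t^{-k/m}. -/
noncomputable def Hfun0 {n : ℕ} (A B : TMat n) (t : ℝ≥0) : ℝ≥0 :=
  (Finset.Icc 1 (n - 1)).sup fun k =>
    (Finset.Icc 1 (n - k)).sup fun m =>
      rkm A B k m ^ ((1 : ℝ) / m) * t ^ (-(k : ℝ) / m)

/-- Pareto-minimal points of a set V ⊆ ℝ≥0 × ℝ≥0. -/
def ParetoMin (V : Set (ℝ≥0 × ℝ≥0)) (p : ℝ≥0 × ℝ≥0) : Prop :=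
  p ∈ V ∧ ¬∃ q ∈ V, q.1 ≤ p.1 ∧ q.2 ≤ p.2 ∧ q ≠ p


namespace Aux
open Finset
variable {n : ℕ}

lemma tmul_assoc (A B C : TMat n) : tmul (tmul A B) C = tmul A (tmul B C) := by
  funext i j
  show (univ.sup fun k => (univ.sup fun l => A i l * B l k) * C k j)
      = univ.sup fun l => A i l * univ.sup fun k => B l k * C k j
  simp only [NNReal.finset_sup_mul, NNReal.mul_finset_sup]
  rw [Finset.sup_comm]
  simp [mul_assoc]

lemma tId_tmul (A : TMat n) : tmul (tId n) A = A := by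
  funext i j
  refine le_antisymm (Finset.sup_le fun k _ => ?_) ?_
  · by_cases h : i = k <;> simp [tId, h]
  · show A i j ≤ univ.sup fun k => tId n i k * A k j
    exact le_trans (by simp [tId]) (Finset.le_sup (Finset.mem_univ i))

lemma tmul_tId (A : TMat n) : tmul A (tId n) = A := by
  funext i j
  refine le_antisymm (Finset.sup_le fun k _ => ?_) ?_
  · by_cases h : k = j <;> simp [tId, h]
  · show A i j ≤ univ.sup fun k => A i k * tId n k j
    exact le_trans (by simp [tId]) (Finset.le_sup (Finset.mem_univ j))

lemma tmul_le_tmul {A B A' B' : TMat n} (h1 : ∀ i j, A i j ≤ A' i j)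
    (h2 : ∀ i j, B i j ≤ B' i j) : ∀ i j, tmul A B i j ≤ tmul A' B' i j := by
  intro i j
  show (univ.sup fun k => A i k * B k j) ≤ univ.sup fun k => A' i k * B' k j
  exact Finset.sup_le fun k _ => le_trans (mul_le_mul' (h1 i k) (h2 k j))
    (Finset.le_sup (f := fun k => A' i k * B' k j) (Finset.mem_univ k))

lemma ttr_le_ttr {A B : TMat n} (h : ∀ i j, A i j ≤ B i j) : ttr A ≤ ttr B := by
  show (univ.sup fun i => A i i) ≤ univ.sup fun i => B i i
  exact Finset.sup_le fun i _ => le_trans (h i i) (Finset.le_sup (f := fun i => B i i) (Finset.mem_univ i))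

lemma ttr_tmul_comm (A B : TMat n) : ttr (tmul A B) = ttr (tmul B A) := by
  show (univ.sup fun i => univ.sup fun k => A i k * B k i)
      = univ.sup fun i => univ.sup fun k => B i k * A k i
  rw [Finset.sup_comm]
  simp [mul_comm]

lemma tpow_succ' (A : TMat n) (k : ℕ) : tpow A (k + 1) = tmul (tpow A k) A := by
  induction k with
  | zero => show tmul A (tId n) = tmul (tId n) A; rw [tmul_tId, tId_tmul]
  | succ k ih =>
      show tmul A (tpow A (k+1)) = tmul (tmul A (tpow A k)) A
      rw [tmul_assoc, ← ih]

lemma tpow_add (A : TMat n) (a b : ℕ) : tpow A (a + b) = tmul (tpow A a) (tpow A b) := by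
  induction a with
  | zero => simp [tpow, tId_tmul]
  | succ a ih =>
      have h : a + 1 + b = (a + b) + 1 := by omega
      rw [h]
      show tmul A (tpow A (a + b)) = tmul (tmul A (tpow A a)) (tpow A b)
      rw [ih, tmul_assoc]

lemma tsmul_tmul (a : ℝ≥0) (A B : TMat n) : tmul (tsmul a A) B = tsmul a (tmul A B) := by
  funext i j
  show (univ.sup fun k => (a * A i k) * B k j) = a * univ.sup fun k => A i k * B k j
  rw [NNReal.mul_finset_sup]
  simp [mul_assoc]

lemma tmul_tsmul (a : ℝ≥0) (A B : TMat n) : tmul A (tsmul a B) = tsmul a (tmul A B) := by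
  funext i j
  show (univ.sup fun k => A i k * (a * B k j)) = a * univ.sup fun k => A i k * B k j
  rw [NNReal.mul_finset_sup]
  congr 1; funext k; ring

lemma ttr_tsmul (a : ℝ≥0) (A : TMat n) : ttr (tsmul a A) = a * ttr A :=
  (NNReal.mul_finset_sup a _ _).symm

lemma tpow_tsmul (a : ℝ≥0) (A : TMat n) (k : ℕ) :
    tpow (tsmul a A) k = tsmul (a ^ k) (tpow A k) := by
  induction k with
  | zero => funext i j; simp [tpow, tsmul]
  | succ k ih =>
      show tmul (tsmul a A) (tpow (tsmul a A) k) = _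
      rw [ih, tsmul_tmul, tmul_tsmul]
      funext i j
      show a * (a ^ k * tmul A (tpow A k) i j) = a ^ (k + 1) * tmul A (tpow A k) i j
      ring


noncomputable def lprod : List (TMat n) → TMat n
  | [] => tId n
  | A :: L => tmul A (lprod L)

lemma lprod_append (L1 L2 : List (TMat n)) :
    lprod (L1 ++ L2) = tmul (lprod L1) (lprod L2) := by
  induction L1 with
  | nil => simp [lprod, tId_tmul]
  | cons A L ih =>
      show tmul A (lprod (L ++ L2)) = tmul (tmul A (lprod L)) (lprod L2)
      rw [ih, tmul_assoc]

lemma ttr_lprod_rotate (L1 L2 : List (TMat n)) :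
    ttr (lprod (L1 ++ L2)) = ttr (lprod (L2 ++ L1)) := by
  rw [lprod_append, lprod_append, ttr_tmul_comm]

lemma tchain_eq_lprod : ∀ (k : ℕ) (F : Fin k → TMat n), tchain k F = lprod (List.ofFn F)
  | 0, F => by simp [tchain, List.ofFn_zero, lprod]
  | k + 1, F => by
      rw [List.ofFn_succ]
      show tmul (F 0) (tchain k fun t => F t.succ) = tmul (F 0) (lprod (List.ofFn fun t => F t.succ))
      rw [tchain_eq_lprod k]

lemma lprod_replicate (X : TMat n) : ∀ (L : List (TMat n)), (∀ A ∈ L, A = X) →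
    lprod L = tpow X L.length := by
  intro L
  induction L with
  | nil => intro _; rfl
  | cons A L ih =>
      intro h
      have hA : A = X := h A (by simp)
      have hL : lprod L = tpow X L.length := ih fun A hA => h A (by simp [hA])
      show tmul A (lprod L) = tpow X (L.length + 1)
      rw [hA, hL]
      rfl

/-- block product: X^{i₁} C ⋯ X^{i_k} C -/
noncomputable def bprod (X C : TMat n) (is : List ℕ) : TMat n :=
  lprod (is.map fun i => tmul (tpow X i) C)

lemma bprod_nil (X C : TMat n) : bprod X C [] = tId n := rfl

lemma bprod_cons (X C : TMat n) (i : ℕ) (t : List ℕ) :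
    bprod X C (i :: t) = tmul (tmul (tpow X i) C) (bprod X C t) := rfl

lemma decomp (X C : TMat n) : ∀ L : List (TMat n), (∀ A ∈ L, A = X ∨ A = C) →
    L.getLast? = some C →
    ∃ is : List ℕ, is ≠ [] ∧ is.length + is.sum = L.length ∧ lprod L = bprod X C is := by
  intro L
  induction L with
  | nil => intro _ h; simp at h
  | cons A L ih =>
      intro hmem hlast
      match L, hlast with
      | [], hlast =>
          have hA : A = C := by simpa using hlast
          refine ⟨[0], by simp, by simp, ?_⟩
          show tmul A (tId n) = bprod X C [0]
          rw [bprod_cons, bprod_nil, tmul_tId, hA]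
          show C = tmul (tmul (tId n) C) (tId n)
          rw [tId_tmul, tmul_tId]
      | A' :: L', hlast =>
          have hlast' : (A' :: L').getLast? = some C := by
            rwa [List.getLast?_cons_cons] at hlast
          obtain ⟨is, hne, hlen, hprod⟩ := ih (fun B hB => hmem B (by simp [hB])) hlast'
          rcases hmem A (by simp) with hA | hA
          · match is, hne with
            | i :: t, _ =>
                refine ⟨(i+1) :: t, by simp, by simp at hlen ⊢; omega, ?_⟩
                show tmul A (lprod (A' :: L')) = _
                rw [hA, hprod, bprod_cons, bprod_cons, ← tmul_assoc]
                congr 1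
                rw [← tmul_assoc]
                congr 1
          · refine ⟨0 :: is, by simp, by simp at hlen ⊢; omega, ?_⟩
            show tmul A (lprod (A' :: L')) = _
            rw [hA, hprod, bprod_cons]
            show tmul C _ = tmul (tmul (tId n) C) _
            rw [tId_tmul]

lemma one_tsmul (A : TMat n) : tsmul 1 A = A := by funext i j; simp [tsmul]

lemma bprod_tsmul (b : ℝ≥0) (X C : TMat n) : ∀ is : List ℕ,
    bprod (tsmul b X) C is = tsmul (b ^ is.sum) (bprod X C is) := by
  intro is
  induction is with
  | nil => simp [bprod_nil, one_tsmul]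
  | cons i t ih =>
      rw [bprod_cons, bprod_cons, ih, tpow_tsmul, tsmul_tmul, tsmul_tmul, tmul_tsmul]
      funext p q
      show b ^ i * (b ^ t.sum * _) = b ^ (i :: t).sum * _
      rw [List.sum_cons, pow_add]
      ring

lemma tpow_le_tpow {X M : TMat n} (h : ∀ i j, X i j ≤ M i j) (k : ℕ) :
    ∀ i j, tpow X k i j ≤ tpow M k i j := by
  induction k with
  | zero => intro i j; exact le_rfl
  | succ k ih => exact tmul_le_tmul h ih

lemma bprod_le_tpow {X C M : TMat n} (hX : ∀ i j, X i j ≤ M i j)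
    (hC : ∀ i j, C i j ≤ M i j) : ∀ is : List ℕ,
    ∀ i j, bprod X C is i j ≤ tpow M (is.sum + is.length) i j := by
  intro is
  induction is with
  | nil => intro i j; exact le_rfl
  | cons a t ih =>
      have h1 : ∀ i j, tmul (tpow X a) C i j ≤ tpow M (a + 1) i j := by
        have : ∀ i j, tmul (tpow M a) M i j ≤ tpow M (a + 1) i j := by
          rw [← tpow_succ']; intro i j; exact le_rfl
        intro i j
        exact le_trans (tmul_le_tmul (tpow_le_tpow hX a) hC i j) (this i j)
      have key : ∀ i j, bprod X C (a :: t) i j ≤ tpow M ((a + 1) + (t.sum + t.length)) i j := by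
        rw [tpow_add]
        exact fun i j => tmul_le_tmul h1 ih i j
      have he : (a + 1) + (t.sum + t.length) = (a :: t).sum + (a :: t).length := by
        simp; omega
      rw [← he]
      exact key

lemma rpow_inv_le_iff {x β : ℝ≥0} {m : ℕ} (hm : m ≠ 0) :
    x ^ ((1 : ℝ) / m) ≤ β ↔ x ≤ β ^ m := by
  have hm' : (0 : ℝ) < m := by exact_mod_cast Nat.pos_of_ne_zero hm
  have h1 : (x ^ ((1 : ℝ) / m)) ^ (m : ℝ) = x := by
    rw [← NNReal.rpow_mul, one_div_mul_cancel (ne_of_gt hm'), NNReal.rpow_one]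
  constructor
  · intro h
    have h2 := NNReal.rpow_le_rpow h (le_of_lt hm')
    rwa [h1, NNReal.rpow_natCast] at h2
  · intro h
    have h2 : x ^ ((1 : ℝ) / m) ≤ ((β ^ m : ℝ≥0)) ^ ((1 : ℝ) / m) :=
      NNReal.rpow_le_rpow h (by positivity)
    rwa [← NNReal.rpow_natCast β m, ← NNReal.rpow_mul, mul_one_div,
      div_self (ne_of_gt hm'), NNReal.rpow_one] at h2


lemma entry_bound (X Y : TMat n) :
    ∀ (k : ℕ) (c : ℝ≥0) (i j : Fin n),
      (∀ L : List (TMat n), L.length = k → (∀ A ∈ L, A = X ∨ A = Y) → lprod L i j ≤ c) →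
      tpow (tadd X Y) k i j ≤ c := by
  intro k
  induction k with
  | zero => intro c i j h; exact h [] rfl (by simp)
  | succ k ih =>
      intro c i j h
      show (Finset.univ.sup fun l => tadd X Y i l * tpow (tadd X Y) k l j) ≤ c
      refine Finset.sup_le fun l _ => ?_
      have key : ∀ Z : TMat n, (Z = X ∨ Z = Y) → Z i l * tpow (tadd X Y) k l j ≤ c := by
        intro Z hZ
        by_cases hz : Z i l = 0
        · simp [hz]
        · have hp : tpow (tadd X Y) k l j ≤ c / Z i l := by
            refine ih (c / Z i l) l j ?_
            intro L hlen hLm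
            have h1 : lprod (Z :: L) i j ≤ c :=
              h (Z :: L) (by simp [hlen]) (by
                intro A hA
                rcases List.mem_cons.mp hA with h' | h'
                · exact h' ▸ hZ
                · exact hLm A h')
            have h2 : Z i l * lprod L l j ≤ lprod (Z :: L) i j :=
              Finset.le_sup (f := fun l => Z i l * lprod L l j) (Finset.mem_univ l)
            exact (le_div_iff₀ (pos_iff_ne_zero.mpr hz)).mpr
              (by rw [mul_comm]; exact le_trans h2 h1)
          calc Z i l * tpow (tadd X Y) k l j ≤ Z i l * (c / Z i l) := mul_le_mul_right hp _
            _ = c := by rw [mul_comm, div_mul_cancel₀ _ hz]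
      have hXY : tadd X Y i l = X i l ⊔ Y i l := rfl
      rcases le_total (X i l) (Y i l) with h' | h'
      · rw [hXY, sup_eq_right.mpr h']; exact key Y (Or.inr rfl)
      · rw [hXY, sup_eq_left.mpr h']; exact key X (Or.inl rfl)

lemma scaled_le_one {β t : ℝ≥0} (hβ : β ≠ 0) (m : ℕ) :
    (β⁻¹) ^ m * t ≤ 1 ↔ t ≤ β ^ m := by
  constructor
  · intro h
    calc t = β ^ m * (β⁻¹ ^ m * t) := by
            rw [← mul_assoc, ← mul_pow, mul_inv_cancel₀ hβ, one_pow, one_mul]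
      _ ≤ β ^ m * 1 := mul_le_mul_right h _
      _ = β ^ m := mul_one _
  · intro h
    calc β⁻¹ ^ m * t ≤ β⁻¹ ^ m * β ^ m := mul_le_mul_right h _
      _ = 1 := by rw [← mul_pow, inv_mul_cancel₀ hβ, one_pow]


lemma word_trace_le {n : ℕ} (B C : TMat n) (hC : tTr C ≤ 1) (β : ℝ≥0) (hβ : 0 < β)
    (hmu : specRad B ≤ β) (hth : sigmaC B C ≤ β) (L : List (TMat n))
    (h1 : 1 ≤ L.length) (h2 : L.length ≤ n)
    (hm : ∀ A ∈ L, A = tsmul β⁻¹ B ∨ A = C) : ttr (lprod L) ≤ 1 := by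
  by_cases hall : ∀ A ∈ L, A = tsmul β⁻¹ B
  · rw [lprod_replicate _ L hall, tpow_tsmul, ttr_tsmul,
      scaled_le_one (ne_of_gt hβ), ← rpow_inv_le_iff (m := L.length) (by omega)]
    refine le_trans ?_ hmu
    exact Finset.le_sup (f := fun k => ttr (tpow B k) ^ ((1 : ℝ) / k))
      (Finset.mem_Icc.mpr ⟨h1, h2⟩)
  · push_neg at hall
    obtain ⟨A0, hA0mem, hA0ne⟩ := hall
    have hA0 : A0 = C := (hm A0 hA0mem).resolve_left hA0ne
    subst hA0
    obtain ⟨L1, L2, hL⟩ := List.append_of_mem hA0mem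
    have hrot : ttr (lprod L) = ttr (lprod (L2 ++ (L1 ++ [A0]))) := by
      rw [hL, List.append_cons, ttr_lprod_rotate]
    have hlen' : (L2 ++ (L1 ++ [A0])).length = L.length := by
      simp [hL]; omega
    have hmem' : ∀ A ∈ L2 ++ (L1 ++ [A0]), A = tsmul β⁻¹ B ∨ A = A0 := by
      intro A hA
      simp only [List.mem_append, List.mem_singleton] at hA
      rcases hA with h | h | rfl
      · exact hm A (by rw [hL]; simp [h])
      · exact hm A (by rw [hL]; simp [h])
      · exact Or.inr rfl
    have hlast : (L2 ++ (L1 ++ [A0])).getLast? = some A0 := by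
      rw [← List.append_assoc]; exact List.getLast?_concat
    obtain ⟨is, hne, hcnt, hprodeq⟩ := decomp (tsmul β⁻¹ B) A0 _ hmem' hlast
    rw [hrot, hprodeq, bprod_tsmul, ttr_tsmul, scaled_le_one (ne_of_gt hβ)]
    have hk'1 : 1 ≤ is.length := List.length_pos_iff.mpr hne
    rw [hlen'] at hcnt
    by_cases hm0 : is.sum = 0
    · have hz : ∀ i ∈ is, i = 0 := by
        intro i hi; have := List.le_sum_of_mem hi; omega
      have hrep : ∀ A ∈ (is.map fun i => tmul (tpow B i) A0), A = A0 := by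
        intro A hA
        simp only [List.mem_map] at hA
        obtain ⟨i, hi, rfl⟩ := hA
        rw [hz i hi]
        show tmul (tId n) A0 = A0
        exact tId_tmul A0
      have hb : bprod B A0 is = tpow A0 is.length := by
        have := lprod_replicate A0 _ hrep
        rw [bprod, this, List.length_map]
      rw [hb, hm0, pow_zero]
      refine le_trans ?_ hC
      exact Finset.le_sup (f := fun k => ttr (tpow A0 k))
        (Finset.mem_Icc.mpr ⟨by omega, by omega⟩)
    · have hfm : ∀ t : Fin is.length, is.get t < is.sum + 1 :=
        fun t => Nat.lt_succ_of_le (List.le_sum_of_mem (List.get_mem is t))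
      have hsum : (∑ t : Fin is.length, ((⟨is.get t, hfm t⟩ : Fin (is.sum + 1)) : ℕ)) = is.sum := by
        show (∑ t : Fin is.length, is.get t) = is.sum
        rw [← List.sum_ofFn, List.ofFn_get]
      have hft : (fun t => (⟨is.get t, hfm t⟩ : Fin (is.sum + 1))) ∈ tuples is.length is.sum :=
        Finset.mem_filter.mpr ⟨Finset.mem_univ _, hsum⟩
      have hchain : tchain is.length
          (fun t => tmul (tpow B (((⟨is.get t, hfm t⟩ : Fin (is.sum + 1)) : ℕ))) A0)
          = bprod B A0 is := by
        rw [tchain_eq_lprod]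
        exact congrArg lprod (List.ofFn_getElem_eq_map is (fun i => tmul (tpow B i) A0))
      rw [← hchain, ← rpow_inv_le_iff (m := is.sum) hm0]
      refine le_trans ?_ hth
      calc ttr (tchain is.length fun t =>
              tmul (tpow B (((⟨is.get t, hfm t⟩ : Fin (is.sum + 1)) : ℕ))) A0) ^ ((1 : ℝ) / is.sum)
          ≤ (tuples is.length is.sum).sup (fun f : Fin is.length → Fin (is.sum + 1) =>
              ttr (tchain is.length fun t => tmul (tpow B ((f t : ℕ))) A0) ^ ((1 : ℝ) / is.sum)) :=
            Finset.le_sup (f := fun f : Fin is.length → Fin (is.sum + 1) =>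
              ttr (tchain is.length fun t => tmul (tpow B ((f t : ℕ))) A0) ^ ((1 : ℝ) / is.sum))
              hft
        _ ≤ (Finset.Icc 1 (n - is.length)).sup (fun m => (tuples is.length m).sup fun f =>
              ttr (tchain is.length fun t => tmul (tpow B ((f t : ℕ))) A0) ^ ((1 : ℝ) / m)) :=
            Finset.le_sup (f := fun m => (tuples is.length m).sup fun f =>
              ttr (tchain is.length fun t => tmul (tpow B ((f t : ℕ))) A0) ^ ((1 : ℝ) / m))
              (Finset.mem_Icc.mpr ⟨by omega, by omega⟩)
        _ ≤ sigmaC B A0 :=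
            Finset.le_sup (f := fun k => (Finset.Icc 1 (n - k)).sup fun m =>
              (tuples k m).sup fun f =>
                ttr (tchain k fun t => tmul (tpow B ((f t : ℕ))) A0) ^ ((1 : ℝ) / m))
              (Finset.mem_Icc.mpr ⟨hk'1, by omega⟩)

end Aux

/-- With Tr(C) ≤ 1 and β > 0: Tr(β⁻¹B ⊕ C) ≤ 1 iff β ≥ max(μ, θ), where μ is the
spectral radius of B and θ = max_{k,m,tuples} (tr(B^{i_1} C ⋯ B^{i_k} C))^{1/m}. -/
theorem stmt10 {n : ℕ} (B C : TMat n) (hC : tTr C ≤ 1) (β : ℝ≥0) (hβ : 0 < β) :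
    tTr (tadd (tsmul β⁻¹ B) C) ≤ 1 ↔ specRad B ⊔ sigmaC B C ≤ β := by
  open Aux in
  constructor
  · intro ht
    have hX : ∀ i j, tsmul β⁻¹ B i j ≤ tadd (tsmul β⁻¹ B) C i j := fun i j => le_sup_left
    have hC' : ∀ i j, C i j ≤ tadd (tsmul β⁻¹ B) C i j := fun i j => le_sup_right
    have hTrk : ∀ k, 1 ≤ k → k ≤ n → ttr (tpow (tadd (tsmul β⁻¹ B) C) k) ≤ 1 := by
      intro k hk1 hk2
      exact le_trans (Finset.le_sup (f := fun k => ttr (tpow (tadd (tsmul β⁻¹ B) C) k))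
        (Finset.mem_Icc.mpr ⟨hk1, hk2⟩)) ht
    refine sup_le ?_ ?_
    · refine Finset.sup_le fun k hk => ?_
      rw [Finset.mem_Icc] at hk
      rw [rpow_inv_le_iff (by omega)]
      have h3 : ttr (tpow (tsmul β⁻¹ B) k) ≤ 1 :=
        le_trans (ttr_le_ttr (tpow_le_tpow hX k)) (hTrk k hk.1 hk.2)
      rwa [tpow_tsmul, ttr_tsmul, scaled_le_one (ne_of_gt hβ)] at h3
    · refine Finset.sup_le fun k' hk' => Finset.sup_le fun m hm => Finset.sup_le fun f hf => ?_
      rw [Finset.mem_Icc] at hk' hm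
      rw [rpow_inv_le_iff (by omega)]
      have hsum : (List.ofFn fun t => ((f t : ℕ))).sum = m := by
        rw [List.sum_ofFn]; exact (Finset.mem_filter.mp hf).2
      have hlen : (List.ofFn fun t => ((f t : ℕ))).length = k' := by simp
      have hchain : tchain k' (fun t => tmul (tpow B ((f t : ℕ))) C)
          = bprod B C (List.ofFn fun t => ((f t : ℕ))) := by
        rw [tchain_eq_lprod, bprod, List.map_ofFn]; rfl
      have heq : bprod (tsmul β⁻¹ B) C (List.ofFn fun t => ((f t : ℕ)))
          = tsmul (β⁻¹ ^ m) (bprod B C (List.ofFn fun t => ((f t : ℕ)))) := by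
        rw [bprod_tsmul, hsum]
      rw [hchain, ← scaled_le_one (ne_of_gt hβ) m, ← ttr_tsmul, ← heq]
      refine le_trans (ttr_le_ttr (fun i j => bprod_le_tpow hX hC' _ i j))
        (hTrk _ ?_ ?_)
      · rw [hsum, hlen]; omega
      · rw [hsum, hlen]; omega
  · intro hb
    have hmu : specRad B ≤ β := le_trans le_sup_left hb
    have hth : sigmaC B C ≤ β := le_trans le_sup_right hb
    refine Finset.sup_le fun k hk => ?_
    rw [Finset.mem_Icc] at hk
    show (Finset.univ.sup fun i => tpow (tadd (tsmul β⁻¹ B) C) k i i) ≤ 1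
    refine Finset.sup_le fun i _ => ?_
    refine entry_bound _ _ k 1 i i ?_
    intro L hlen hm'
    refine le_trans (Finset.le_sup (f := fun i => lprod L i i) (Finset.mem_univ i)) ?_
    exact word_trace_le B C hC β hβ hmu hth L (by omega) (by omega) hm'
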